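/- arXiv:2604.23133 — 2 statements merged into one kernel-verified Lean document; each statement's English description precedes it below -/
import Mathlib

section
/- For the sequence p_n (hitting probabilities of a fair die random walk), p_n = 7^{n-1}/6^n for 1 ≤ n ≤ 6; in particular p_n is strictly increasing on {1,...,6}. -/
/-- For the die-roll hitting probabilities, `p n = 7^(n-1)/6^n` for `1 ≤ n ≤ 6`;
in particular `p` is strictly increasing on `{1,...,6}`. -/
theorem stmt1 (p : ℕ → ℚ)
    (h0 : p 0 = 1)
    (hrec : ∀ n : ℕ, 1 ≤ n →
      p n = (1/6) * ∑ i ∈ Finset.Icc 1 (min n 6), p (n - i)) :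
    (∀ n : ℕ, 1 ≤ n → n ≤ 6 → p n = (7:ℚ)^(n-1) / 6^n) ∧
    (∀ m n : ℕ, 1 ≤ m → m < n → n ≤ 6 → p m < p n) := by
  have h1 := hrec 1 (by norm_num)
  have h2 := hrec 2 (by norm_num)
  have h3 := hrec 3 (by norm_num)
  have h4 := hrec 4 (by norm_num)
  have h5 := hrec 5 (by norm_num)
  have h6 := hrec 6 (by norm_num)
  simp only [show min 1 6 = 1 from rfl, show min 2 6 = 2 from rfl,
    show min 3 6 = 3 from rfl, show min 4 6 = 4 from rfl,
    show min 5 6 = 5 from rfl, show min 6 6 = 6 from rfl] at h1 h2 h3 h4 h5 h6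
  norm_num [Finset.sum_Icc_succ_top] at h1 h2 h3 h4 h5 h6
  rw [h0] at h1
  rw [h0, h1] at h2
  rw [h0, h1, h2] at h3
  rw [h0, h1, h2, h3] at h4
  rw [h0, h1, h2, h3, h4] at h5
  rw [h0, h1, h2, h3, h4, h5] at h6
  norm_num at h1 h2 h3 h4 h5 h6
  constructor
  · intro n hn hn6
    interval_cases n <;> simp [h1, h2, h3, h4, h5, h6] <;> norm_num
  · intro m n hm hmn hn6
    have hm6 : m ≤ 6 := by omega
    have hn1 : 1 ≤ n := by omega
    interval_cases m <;> interval_cases n <;> simp [h1, h2, h3, h4, h5, h6] <;> norm_num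
end

section
/- The sequence p_n defined by the six-term averaging recurrence converges to 2/7 as n → ∞. -/
open Filter Topology

/-- The sequence defined by the six-term averaging recurrence converges to `2/7`. -/
theorem stmt2 (p : ℕ → ℝ)
    (h0 : p 0 = 1)
    (hrec : ∀ n : ℕ, 1 ≤ n →
      p n = (1/6) * ∑ i ∈ Finset.Icc 1 (min n 6), p (n - i)) :
    Tendsto p atTop (𝓝 (2/7)) := by
  -- explicit six-term recurrence
  have hrec6 : ∀ n : ℕ,
      p (n+6) = (p n + p (n+1) + p (n+2) + p (n+3) + p (n+4) + p (n+5))/6 := by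
    intro n
    have h := hrec (n+6) (by omega)
    have hmin : min (n+6) 6 = 6 := by omega
    rw [hmin] at h
    have hI : Finset.Icc 1 6 = ({1,2,3,4,5,6} : Finset ℕ) := by decide
    rw [hI] at h
    simp [Finset.sum_insert, Finset.mem_insert] at h
    rw [h]; ring
  -- small values
  have hp1 : p 1 = 1/6 := by
    have h := hrec 1 le_rfl
    norm_num [show min 1 6 = 1 from rfl] at h
    rw [h, h0]; norm_num
  have hp2 : p 2 = 7/36 := by
    have h := hrec 2 (by norm_num)
    have hI : Finset.Icc 1 (min 2 6) = ({1,2} : Finset ℕ) := by decide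
    rw [hI] at h
    simp [Finset.sum_insert] at h
    rw [h, h0, hp1]; norm_num
  have hp3 : p 3 = 49/216 := by
    have h := hrec 3 (by norm_num)
    have hI : Finset.Icc 1 (min 3 6) = ({1,2,3} : Finset ℕ) := by decide
    rw [hI] at h
    simp [Finset.sum_insert] at h
    rw [h, h0, hp1, hp2]; norm_num
  have hp4 : p 4 = 343/1296 := by
    have h := hrec 4 (by norm_num)
    have hI : Finset.Icc 1 (min 4 6) = ({1,2,3,4} : Finset ℕ) := by decide
    rw [hI] at h
    simp [Finset.sum_insert] at h
    rw [h, h0, hp1, hp2, hp3]; norm_num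
  have hp5 : p 5 = 2401/7776 := by
    have h := hrec 5 (by norm_num)
    have hI : Finset.Icc 1 (min 5 6) = ({1,2,3,4,5} : Finset ℕ) := by decide
    rw [hI] at h
    simp [Finset.sum_insert] at h
    rw [h, h0, hp1, hp2, hp3, hp4]; norm_num
  -- window max and min
  have hWne : ∀ n : ℕ, (Finset.Icc n (n+5)).Nonempty :=
    fun n => Finset.nonempty_Icc.2 (by omega)
  set M : ℕ → ℝ := fun n => (Finset.Icc n (n+5)).sup' (hWne n) p with hMdef
  set m : ℕ → ℝ := fun n => (Finset.Icc n (n+5)).inf' (hWne n) p with hmdef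
  have hpleM : ∀ n k : ℕ, k ≤ 5 → p (n+k) ≤ M n := by
    intro n k hk
    exact Finset.le_sup' p (by simp [Finset.mem_Icc]; omega)
  have hmlep : ∀ n k : ℕ, k ≤ 5 → m n ≤ p (n+k) := by
    intro n k hk
    exact Finset.inf'_le p (by simp [Finset.mem_Icc]; omega)
  have hpleM0 : ∀ n : ℕ, p n ≤ M n := fun n => by simpa using hpleM n 0 (by norm_num)
  have hmlep0 : ∀ n : ℕ, m n ≤ p n := fun n => by simpa using hmlep n 0 (by norm_num)
  have hmM : ∀ n, m n ≤ M n := fun n => (hmlep0 n).trans (hpleM0 n)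
  -- p (n+6) is between m n and M n
  have hrecleM : ∀ n, p (n+6) ≤ M n := by
    intro n
    have h := hrec6 n
    have b0 := hpleM0 n; have b1 := hpleM n 1 (by norm_num)
    have b2 := hpleM n 2 (by norm_num); have b3 := hpleM n 3 (by norm_num)
    have b4 := hpleM n 4 (by norm_num); have b5 := hpleM n 5 (by norm_num)
    rw [h]; linarith
  have hreclem : ∀ n, m n ≤ p (n+6) := by
    intro n
    have h := hrec6 n
    have b0 := hmlep0 n; have b1 := hmlep n 1 (by norm_num)
    have b2 := hmlep n 2 (by norm_num); have b3 := hmlep n 3 (by norm_num)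
    have b4 := hmlep n 4 (by norm_num); have b5 := hmlep n 5 (by norm_num)
    rw [h]; linarith
  -- monotonicity of windows
  have hMstep : ∀ n, M (n+1) ≤ M n := by
    intro n
    apply Finset.sup'_le
    intro j hj
    simp [Finset.mem_Icc] at hj
    rcases Nat.lt_or_ge j (n+6) with hlt | hge
    · have : j = n + (j - n) := by omega
      rw [this]; exact hpleM n (j - n) (by omega)
    · have : j = n + 6 := by omega
      rw [this]; exact hrecleM n
  have hmstep : ∀ n, m n ≤ m (n+1) := by
    intro n
    apply Finset.le_inf'
    intro j hj
    simp [Finset.mem_Icc] at hj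
    rcases Nat.lt_or_ge j (n+6) with hlt | hge
    · have : j = n + (j - n) := by omega
      rw [this]; exact hmlep n (j - n) (by omega)
    · have : j = n + 6 := by omega
      rw [this]; exact hreclem n
  have hManti : Antitone M := antitone_nat_of_succ_le hMstep
  have hmmono : Monotone m := monotone_nat_of_le_succ hmstep
  have hpleM' : ∀ n j : ℕ, n ≤ j → p j ≤ M n := by
    intro n j hnj
    exact (hpleM0 j).trans (hManti hnj)
  have hmlep' : ∀ n j : ℕ, n ≤ j → m n ≤ p j := by
    intro n j hnj
    exact (hmmono hnj).trans (hmlep0 j)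
  -- attainment of the minimum
  have hattain : ∀ n : ℕ, ∃ k ≤ 5, m n = p (n+k) := by
    intro n
    obtain ⟨j, hj, hjm⟩ := Finset.exists_mem_eq_inf' (hWne n) p
    simp [Finset.mem_Icc] at hj
    refine ⟨j - n, by omega, ?_⟩
    have hje : n + (j - n) = j := by omega
    rw [hje]
    exact hjm
  -- the contraction chain
  have hchain : ∀ n : ℕ, ∀ k ≤ 5,
      p (n+6+k) ≤ M n - (M n - m n) / 6^(k+1) := by
    intro n k
    induction k with
    | zero =>
      intro _
      obtain ⟨j, hj, hjm⟩ := hattain n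
      have h := hrec6 n
      have b0 := hpleM0 n; have b1 := hpleM n 1 (by norm_num)
      have b2 := hpleM n 2 (by norm_num); have b3 := hpleM n 3 (by norm_num)
      have b4 := hpleM n 4 (by norm_num); have b5 := hpleM n 5 (by norm_num)
      interval_cases j <;> (rw [show n+6+0 = n+6 from rfl, h]; rw [hjm] at *; norm_num; linarith)
    | succ k ih =>
      intro hk
      have ihk := ih (by omega)
      have h := hrec6 (n+k+1)
      have b1 := hpleM' n (n+k+1) (by omega)
      have b2 := hpleM' n (n+k+2) (by omega)
      have b3 := hpleM' n (n+k+3) (by omega)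
      have b4 := hpleM' n (n+k+4) (by omega)
      have b5 := hpleM' n (n+k+5) (by omega)
      have heq : n+k+1+6 = n+6+(k+1) := by omega
      rw [heq] at h
      have heq2 : n+k+1+1 = n+k+2 := by omega
      have heq3 : n+k+1+2 = n+k+3 := by omega
      have heq4 : n+k+1+3 = n+k+4 := by omega
      have heq5 : n+k+1+4 = n+k+5 := by omega
      have heq6 : n+k+1+5 = n+6+k := by omega
      rw [heq2, heq3, heq4, heq5, heq6] at h
      -- abbreviate
      have hDpos : (0:ℝ) < 6^(k+1) := by positivity
      set D : ℝ := (6:ℝ)^(k+1) with hD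
      have hpow : (6:ℝ)^(k+1+1) = D * 6 := by rw [hD, pow_succ]
      rw [h, hpow]
      have hdd : (M n - m n) / (D * 6) = ((M n - m n) / D) / 6 := by
        rw [div_div]
      rw [hdd]
      set e : ℝ := (M n - m n) / D with he
      linarith
  -- contraction over a block of 6
  have hdnonneg : ∀ n, 0 ≤ M n - m n := fun n => by linarith [hmM n]
  have hM6 : ∀ n, M (n+6) ≤ M n - (M n - m n) / 46656 := by
    intro n
    apply Finset.sup'_le
    intro j hj
    simp [Finset.mem_Icc] at hj
    obtain ⟨k, hk, rfl⟩ : ∃ k, k ≤ 5 ∧ j = n + 6 + k := ⟨j - (n+6), by omega, by omega⟩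
    have h := hchain n k hk
    have hd := hdnonneg n
    refine h.trans ?_
    have : (M n - m n) / 46656 ≤ (M n - m n) / 6^(k+1) := by
      apply div_le_div_of_nonneg_left hd (by positivity)
      calc ((6:ℝ))^(k+1) ≤ 6^6 := pow_le_pow_right₀ (by norm_num) (by omega)
        _ = 46656 := by norm_num
    linarith
  have hm6 : ∀ n, m n ≤ m (n+6) := fun n => hmmono (by omega)
  have hcontr : ∀ n, M (n+6) - m (n+6) ≤ (46655/46656) * (M n - m n) := by
    intro n
    have h1 := hM6 n
    have h2 := hm6 n
    linarith
  -- geometric decay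
  have hgeo : ∀ k : ℕ, M (6*k) - m (6*k) ≤ (46655/46656)^k * (M 0 - m 0) := by
    intro k
    induction k with
    | zero => simp
    | succ k ih =>
      have h := hcontr (6*k)
      have heq : 6*(k+1) = 6*k+6 := by omega
      rw [heq]
      calc M (6*k+6) - m (6*k+6) ≤ (46655/46656) * (M (6*k) - m (6*k)) := h
        _ ≤ (46655/46656) * ((46655/46656)^k * (M 0 - m 0)) := by
            apply mul_le_mul_of_nonneg_left ih (by norm_num)
        _ = (46655/46656)^(k+1) * (M 0 - m 0) := by ring
  have hdstep : ∀ n, M (n+1) - m (n+1) ≤ M n - m n := by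
    intro n; have := hMstep n; have := hmstep n; linarith
  have hdanti : Antitone (fun n => M n - m n) := antitone_nat_of_succ_le hdstep
  have hdbound : ∀ n : ℕ, M n - m n ≤ (46655/46656)^(n/6) * (M 0 - m 0) := by
    intro n
    calc M n - m n ≤ M (6*(n/6)) - m (6*(n/6)) := hdanti (by omega)
      _ ≤ (46655/46656)^(n/6) * (M 0 - m 0) := hgeo (n/6)
  -- d tends to 0
  have hdiv : Tendsto (fun n : ℕ => n / 6) atTop atTop :=
    tendsto_atTop_atTop.2 fun b => ⟨6*b, fun n hn => by omega⟩
  have hpowz : Tendsto (fun k : ℕ => ((46655:ℝ)/46656)^k) atTop (𝓝 0) :=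
    tendsto_pow_atTop_nhds_zero_of_lt_one (by norm_num) (by norm_num)
  have hgz : Tendsto (fun n : ℕ => ((46655:ℝ)/46656)^(n/6) * (M 0 - m 0)) atTop (𝓝 0) := by
    have := (hpowz.comp hdiv).mul_const (M 0 - m 0)
    simpa using this
  have hdz : Tendsto (fun n => M n - m n) atTop (𝓝 0) :=
    squeeze_zero hdnonneg hdbound hgz
  -- the invariant
  have hinv : ∀ n : ℕ, p n + 2*p (n+1) + 3*p (n+2) + 4*p (n+3) + 5*p (n+4) + 6*p (n+5) = 6 := by
    intro n
    induction n with
    | zero =>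
      norm_num [h0, hp1, hp2, hp3, hp4, hp5]
    | succ n ih =>
      have h := hrec6 n
      have e1 : n+1+1 = n+2 := by omega
      have e2 : n+1+2 = n+3 := by omega
      have e3 : n+1+3 = n+4 := by omega
      have e4 : n+1+4 = n+5 := by omega
      have e5 : n+1+5 = n+6 := by omega
      rw [e1, e2, e3, e4, e5, h]
      linarith
  -- 2/7 is between m n and M n
  have hbetween : ∀ n : ℕ, m n ≤ 2/7 ∧ 2/7 ≤ M n := by
    intro n
    have h := hinv n
    have b0 := hpleM0 n; have b1 := hpleM n 1 (by norm_num)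
    have b2 := hpleM n 2 (by norm_num); have b3 := hpleM n 3 (by norm_num)
    have b4 := hpleM n 4 (by norm_num); have b5 := hpleM n 5 (by norm_num)
    have c0 := hmlep0 n; have c1 := hmlep n 1 (by norm_num)
    have c2 := hmlep n 2 (by norm_num); have c3 := hmlep n 3 (by norm_num)
    have c4 := hmlep n 4 (by norm_num); have c5 := hmlep n 5 (by norm_num)
    constructor <;> linarith
  -- final squeeze
  have habs : ∀ n : ℕ, |p n - 2/7| ≤ M n - m n := by
    intro n
    obtain ⟨hl, hr⟩ := hbetween n
    have hpu : p n ≤ M n := hpleM0 n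
    have hpl : m n ≤ p n := hmlep0 n
    rw [abs_le]
    constructor <;> linarith
  rw [tendsto_iff_dist_tendsto_zero]
  simp only [Real.dist_eq]
  exact squeeze_zero (fun n => abs_nonneg _) habs hdz
end
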